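/- Let G be the directed multigraph on vertex set {t_1,…,t_k, r_1,…,r_k, m_1, m_2} with unit-capacity edges: (t_i, r_i) for all i; (r_i, t_j) for all i ≠ j; (r_i, m_2) for all i; (m_2, m_1); (m_1, t_i) for all i. Then every directed path in G from r_i to t_i that does not use the edge (t_i, r_i) passes through the edge (m_2, m_1). -/
import Mathlib


/-- Vertices of the constructed network: transmitters, receivers, and two midway nodes. -/
abbrev NetV (k : ℕ) := (Fin k ⊕ Fin k) ⊕ Fin 2

def tNode {k : ℕ} (i : Fin k) : NetV k := Sum.inl (Sum.inl i)
def rNode {k : ℕ} (i : Fin k) : NetV k := Sum.inl (Sum.inr i)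
def m1Node {k : ℕ} : NetV k := Sum.inr 0
def m2Node {k : ℕ} : NetV k := Sum.inr 1

/-- The directed (quantum) edges of the constructed network:
`(t_i, r_i)`, `(r_i, t_j)` for `i ≠ j`, `(r_i, m_2)`, `(m_2, m_1)`, `(m_1, t_i)`. -/
def netEdge {k : ℕ} (u v : NetV k) : Prop :=
  (∃ i, u = tNode i ∧ v = rNode i) ∨
  (∃ i j, i ≠ j ∧ u = rNode i ∧ v = tNode j) ∨
  (∃ i, u = rNode i ∧ v = m2Node) ∨
  (u = m2Node ∧ v = m1Node) ∨
  (∃ i, u = m1Node ∧ v = tNode i)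

/-- Every directed path from `r_i` to `t_i` that avoids the forward edges `(t_ℓ, r_ℓ)`
must pass through the bottleneck edge `(m_2, m_1)`. -/
theorem path_through_bottleneck {k : ℕ} (i : Fin k) (p : List (NetV k))
    (hchain : p.Chain' netEdge)
    (hhead : p.head? = some (rNode i)) (hlast : p.getLast? = some (tNode i))
    (havoid : ∀ ℓ : Fin k, (tNode ℓ, rNode ℓ) ∉ p.zip p.tail) :
    (m2Node, m1Node) ∈ p.zip p.tail := by
  obtain ⟨a, rest, rfl⟩ : ∃ a rest, p = a :: rest := by
    cases p with
    | nil => simp at hhead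
    | cons a rest => exact ⟨a, rest, rfl⟩
  simp only [List.head?_cons, Option.some.injEq] at hhead
  subst hhead
  cases rest with
  | nil => simp [tNode, rNode] at hlast
  | cons b rest' =>
    have hedge : netEdge (rNode i) b := (List.isChain_cons_cons.mp hchain).1
    rcases hedge with ⟨j, hj, _⟩ | ⟨i', j, hij, hi', hb⟩ | ⟨i', hi', hb⟩ | ⟨h1, _⟩ | ⟨j, h1, _⟩
    · simp [rNode, tNode] at hj
    · have hii : i' = i := by
        simpa [rNode] using hi'.symm
      subst hii; subst hb
      cases rest' with
      | nil =>
        simp [tNode, rNode] at hlast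
        exact absurd hlast.symm hij
      | cons c rest'' =>
        have hedge2 : netEdge (tNode j) c :=
          (List.isChain_cons_cons.mp (List.isChain_cons_cons.mp hchain).2).1
        rcases hedge2 with ⟨l, hl, hc⟩ | ⟨a, b', _, ha, _⟩ | ⟨a, ha, _⟩ | ⟨ha, _⟩ | ⟨a, ha, _⟩
        · have hj : j = l := by simpa [tNode] using hl
          subst hj
          subst hc
          exact absurd (show ((tNode j, rNode j) : NetV k × NetV k) ∈ _ from by simp) (havoid j)
        · simp [tNode, rNode] at ha
        · simp [tNode, rNode] at ha
        · simp [tNode, m2Node] at ha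
        · simp [tNode, m1Node] at ha
    · subst hb
      cases rest' with
      | nil => simp [tNode, m2Node] at hlast
      | cons c rest'' =>
        have hedge2 : netEdge (m2Node : NetV k) c :=
          (List.isChain_cons_cons.mp (List.isChain_cons_cons.mp hchain).2).1
        rcases hedge2 with ⟨l, hl, _⟩ | ⟨a, b', _, ha, _⟩ | ⟨a, ha, _⟩ | ⟨_, hc⟩ | ⟨a, ha, _⟩
        · simp [tNode, m2Node] at hl
        · simp [rNode, m2Node] at ha
        · simp [rNode, m2Node] at ha
        · subst hc; simp
        · simp [m1Node, m2Node] at ha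
    · simp [rNode, m2Node] at h1
    · simp [rNode, m1Node] at h1
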